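/- Normal forms detect algebra membership: let A be a subalgebra of MvPolynomial σ k, let f be a polynomial, and let r be a polynomial such that f − r ∈ A and such that for every exponent vector d in the support of r, the monomial x^d does not lie in the initial algebra in_m(A). Then f ∈ A if and only if r = 0. -/

import Mathlib

open MvPolynomial

noncomputable section

variable {σ : Type*} [Fintype σ] {k : Type*} [Field k]

/-- The degree (largest exponent vector) of a polynomial with respect to a monomial order. -/
def MonomialOrder.degree' (m : MonomialOrder σ) (f : MvPolynomial σ k) : σ →₀ ℕ :=
  m.toSyn.symm (f.support.sup fun d => m.toSyn d)

/-- The leading term of a polynomial with respect to a monomial order. -/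
def MonomialOrder.leadTerm (m : MonomialOrder σ) (f : MvPolynomial σ k) : MvPolynomial σ k :=
  monomial (m.degree' f) (f.coeff (m.degree' f))

/-- The initial algebra of a subalgebra `A`: the `k`-subalgebra generated by the leading
terms of the nonzero elements of `A`. -/
def MonomialOrder.initialAlgebra (m : MonomialOrder σ) (A : Subalgebra k (MvPolynomial σ k)) :
    Subalgebra k (MvPolynomial σ k) :=
  Algebra.adjoin k {p | ∃ a ∈ A, a ≠ 0 ∧ p = m.leadTerm a}

/-- Normal forms detect algebra membership. -/
theorem mem_iff_normalForm_eq_zero (m : MonomialOrder σ) (A : Subalgebra k (MvPolynomial σ k))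
    (f r : MvPolynomial σ k) (h : f - r ∈ A)
    (hr : ∀ d ∈ r.support, (monomial d (1 : k)) ∉ m.initialAlgebra A) :
    f ∈ A ↔ r = 0 := by
  constructor
  · intro hf
    by_contra hr0
    have hrA : r ∈ A := by
      have : f - (f - r) ∈ A := A.sub_mem hf h
      simpa using this
    -- the degree of r lies in its support
    obtain ⟨d, hd, hsup⟩ := Finset.exists_mem_eq_sup r.support
      (MvPolynomial.support_nonempty.mpr hr0) (fun d => m.toSyn d)
    have hdeg : m.degree' r = d := by
      simp [MonomialOrder.degree', hsup]
    have hcoeff : r.coeff d ≠ 0 := by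
      rwa [← MvPolynomial.mem_support_iff]
    have hlead : m.leadTerm r ∈ m.initialAlgebra A :=
      Algebra.subset_adjoin ⟨r, hrA, hr0, rfl⟩
    have : (monomial d (1 : k)) ∈ m.initialAlgebra A := by
      have : (r.coeff d)⁻¹ • m.leadTerm r ∈ m.initialAlgebra A :=
        Subalgebra.smul_mem _ hlead _
      rwa [MonomialOrder.leadTerm, hdeg, MvPolynomial.smul_monomial,
        smul_eq_mul, inv_mul_cancel₀ hcoeff] at this
    exact hr d hd this
  · rintro rfl
    simpa using h
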